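/- arXiv:1010.4146 — 4 statements merged into one kernel-verified Lean document; each statement's English description precedes it below -/
import Mathlib

section
/- For every natural number c ≥ 4, the essential polynomials of K_4(4,2,1,2,c+2,c) and K_4(3,2,2,c,1,c+3) are equal as polynomials in ℤ[x], where Q for parameters (α,β,γ,δ,ε,η) is x^{η+δ+ε} + x^{δ+γ+β} + x^{α+η+γ} + x^{α+ε+β} + x^{α+δ} + x^{η+β} + x^{γ+ε} - (x+1)(x^α + x^β + x^γ + x^δ + x^ε + x^η). -/
open Polynomial

/-- Essential polynomial of the K_4-homeomorph K_4(α,β,γ,δ,ε,η). -/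
noncomputable def essQ (α β γ δ ε η : ℕ) : Polynomial ℤ :=
  X ^ (η + δ + ε) + X ^ (δ + γ + β) + X ^ (α + η + γ) + X ^ (α + ε + β) +
    X ^ (α + δ) + X ^ (η + β) + X ^ (γ + ε) -
    (X + 1) * (X ^ α + X ^ β + X ^ γ + X ^ δ + X ^ ε + X ^ η)

theorem stmt_16 (c : ℕ) (h : 4 ≤ c) :
    essQ 4 2 1 2 (c+2) c = essQ 3 2 2 c 1 (c+3) := by
  simp only [essQ]
  ring_nf
end

section
/- For every natural number b ≥ 2, the essential polynomials of K_4(4,2,1,b+2,b+2,b) and K_4(4,2,1,b+1,b,b+3) are equal as polynomials in ℤ[x], where Q for parameters (α,β,γ,δ,ε,η) is x^{η+δ+ε} + x^{δ+γ+β} + x^{α+η+γ} + x^{α+ε+β} + x^{α+δ} + x^{η+β} + x^{γ+ε} - (x+1)(x^α + x^β + x^γ + x^δ + x^ε + x^η). -/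
open Polynomial

theorem stmt_17 (b : ℕ) (h : 2 ≤ b) :
    essQ 4 2 1 (b+2) (b+2) b = essQ 4 2 1 (b+1) b (b+3) := by
  simp only [essQ]
  ring_nf
end

section
/- For every natural number b ≥ 2, the essential polynomials of K_4(4,2,1,b,b+4,b+2) and K_4(4,2,1,b+1,b,b+5) are equal as polynomials in ℤ[x], where Q for parameters (α,β,γ,δ,ε,η) is x^{η+δ+ε} + x^{δ+γ+β} + x^{α+η+γ} + x^{α+ε+β} + x^{α+δ} + x^{η+β} + x^{γ+ε} - (x+1)(x^α + x^β + x^γ + x^δ + x^ε + x^η). -/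
open Polynomial

theorem stmt_18 (b : ℕ) (h : 2 ≤ b) :
    essQ 4 2 1 b (b+4) (b+2) = essQ 4 2 1 (b+1) b (b+5) := by
  simp only [essQ]
  ring_nf
end

section
/- For natural numbers δ ≥ 2, η ≥ 2, ε ≥ 2 and a, b ≥ 2 with η + δ + ε = a + b + 1, if the polynomial identity x^δ (x^2 + x + 1) + (x^η - x^a - x^b)(x^3 + x + 1) + x^ε (x^4 + x^2 + 1) = 2x^3 + x^2 holds in ℤ[x], then 2 ∈ {δ, ε, η}. -/
open Polynomial

theorem stmt_19 (δ η ε a b : ℕ) (hδ : 2 ≤ δ) (hη : 2 ≤ η) (hε : 2 ≤ ε)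
    (ha : 2 ≤ a) (hb : 2 ≤ b) (hsum : η + δ + ε = a + b + 1)
    (h : (X : ℤ[X]) ^ δ * (X ^ 2 + X + 1) +
        ((X : ℤ[X]) ^ η - X ^ a - X ^ b) * (X ^ 3 + X + 1) +
        X ^ ε * (X ^ 4 + X ^ 2 + 1) = 2 * X ^ 3 + X ^ 2) :
    δ = 2 ∨ ε = 2 ∨ η = 2 := by
  by_contra hc
  push_neg at hc
  obtain ⟨h1, h2, h3⟩ := hc
  have h2c := congrArg (fun p => p.coeff 2) h
  have e1 : ¬(2 = δ + 2) := by omega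
  have e2 : ¬(2 = δ + 1) := by omega
  have e3 : ¬(2 = δ) := by omega
  have e4 : ¬(2 = η + 3) := by omega
  have e5 : ¬(2 = η + 1) := by omega
  have e6 : ¬(2 = η) := by omega
  have e7 : ¬(2 = a + 3) := by omega
  have e8 : ¬(2 = a + 1) := by omega
  have e9 : ¬(2 = b + 3) := by omega
  have e10 : ¬(2 = b + 1) := by omega
  have e11 : ¬(2 = ε + 4) := by omega
  have e12 : ¬(2 = ε + 2) := by omega
  have e13 : ¬(2 = ε) := by omega
  have e14 : ¬((2:ℕ) = 3) := by omega
  simp only [mul_add, sub_mul, mul_one, ← pow_add, ← pow_succ, coeff_add, coeff_sub,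
    coeff_X_pow, e1, e2, e3, e4, e5, e6, e7, e8, e9, e10, e11, e12, e13, e14,
    if_false, if_true, if_neg] at h2c
  norm_num at h2c
  split_ifs at h2c <;> omega
end
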